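/- Let μ > 0, σ > 0, α > 1, and b be real. Define the one-sided truncated normal densities p(x) = (1/(μσ√(2π))) · exp(-x²/(2μ²σ²)) / Φ(b/(μσ)) and q(x) = (1/(μσ√(2π))) · exp(-(x-μ)²/(2μ²σ²)) / Φ((b-μ)/(μσ)) for x ≤ b. Then (1/(α-1)) · ln(∫_{-∞}^b p(x)^α · q(x)^(1-α) dx) ≤ α/(2σ²). -/

import Mathlib

open MeasureTheory Real Filter

/-- The standard normal cumulative distribution function
`Φ(x) = (√(2π))⁻¹ ∫_{-∞}^x exp(-t²/2) dt`. -/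
noncomputable def stdNormalCDF (x : ℝ) : ℝ :=
  (Real.sqrt (2 * Real.pi))⁻¹ * ∫ t in Set.Iic x, Real.exp (-t ^ 2 / 2)

/-- The standard normal density `φ(x) = (√(2π))⁻¹ exp(-x²/2)`. -/
noncomputable def stdNormalPDF (x : ℝ) : ℝ :=
  (Real.sqrt (2 * Real.pi))⁻¹ * Real.exp (-x ^ 2 / 2)

open Set

lemma gauss_integrable : Integrable (fun t : ℝ => Real.exp (-t ^ 2 / 2)) := by
  have h := integrable_exp_neg_mul_sq (by norm_num : (0:ℝ) < 1/2)
  convert h using 2 with t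
  ring_nf

lemma gauss_mul_integrable : Integrable (fun t : ℝ => -t * Real.exp (-t ^ 2 / 2)) := by
  have h := (integrable_mul_exp_neg_mul_sq (by norm_num : (0:ℝ) < 1/2)).neg
  convert h using 2 with t
  simp only [Pi.neg_apply]
  ring_nf

lemma sqrt_two_pi_pos : 0 < Real.sqrt (2 * Real.pi) :=
  Real.sqrt_pos.mpr (by positivity)

lemma stdNormalPDF_pos (x : ℝ) : 0 < stdNormalPDF x :=
  mul_pos (inv_pos.mpr sqrt_two_pi_pos) (Real.exp_pos _)

lemma stdNormalCDF_pos (x : ℝ) : 0 < stdNormalCDF x := by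
  refine mul_pos (inv_pos.mpr sqrt_two_pi_pos) ?_
  rw [setIntegral_pos_iff_support_of_nonneg_ae
    (ae_of_all _ fun t => (Real.exp_pos _).le) gauss_integrable.integrableOn]
  have : (Function.support fun t : ℝ => Real.exp (-t ^ 2 / 2)) = univ := by
    ext t; simp [Function.support, (Real.exp_pos _).ne']
  rw [this, univ_inter]
  simp [Real.volume_Iic]

lemma hasDerivAt_neg_sq_half (t : ℝ) : HasDerivAt (fun t : ℝ => -t ^ 2 / 2) (-t) t := by
  have h := ((hasDerivAt_pow 2 t).neg).div_const 2
  refine h.congr_deriv ?_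
  push_cast
  ring

lemma hasDerivAt_gauss (t : ℝ) :
    HasDerivAt (fun t : ℝ => Real.exp (-t ^ 2 / 2)) (-t * Real.exp (-t ^ 2 / 2)) t := by
  have h := (hasDerivAt_neg_sq_half t).exp
  convert h using 1; ring

lemma hasDerivAt_stdNormalCDF (x : ℝ) :
    HasDerivAt stdNormalCDF (stdNormalPDF x) x := by
  have key : ∀ y : ℝ, stdNormalCDF y =
      (Real.sqrt (2 * Real.pi))⁻¹ *
        ((∫ t in Set.Iic (0:ℝ), Real.exp (-t ^ 2 / 2)) +
          ∫ t in (0:ℝ)..y, Real.exp (-t ^ 2 / 2)) := by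
    intro y
    rw [← intervalIntegral.integral_Iic_sub_Iic gauss_integrable.integrableOn
      gauss_integrable.integrableOn]
    unfold stdNormalCDF; ring
  have hcont : Continuous (fun t : ℝ => Real.exp (-t ^ 2 / 2)) := by continuity
  have hder : HasDerivAt (fun y : ℝ => (Real.sqrt (2 * Real.pi))⁻¹ *
      ((∫ t in Set.Iic (0:ℝ), Real.exp (-t ^ 2 / 2)) +
        ∫ t in (0:ℝ)..y, Real.exp (-t ^ 2 / 2)))
      ((Real.sqrt (2 * Real.pi))⁻¹ * Real.exp (-x ^ 2 / 2)) x := by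
    have h1 : HasDerivAt (fun y : ℝ => ∫ t in (0:ℝ)..y, Real.exp (-t ^ 2 / 2))
        (Real.exp (-x ^ 2 / 2)) x :=
      intervalIntegral.integral_hasDerivAt_right
        (hcont.intervalIntegrable _ _)
        (hcont.stronglyMeasurableAtFilter _ _) hcont.continuousAt
    simpa using (h1.const_add _).const_mul ((Real.sqrt (2 * Real.pi))⁻¹)
  exact hder.congr_of_eventuallyEq (Eventually.of_forall key)

lemma integral_neg_mul_gauss (x : ℝ) :
    ∫ t in Set.Iic x, -t * Real.exp (-t ^ 2 / 2) = Real.exp (-x ^ 2 / 2) := by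
  have h := integral_Iic_of_hasDerivAt_of_tendsto'
    (f := fun t : ℝ => Real.exp (-t ^ 2 / 2))
    (f' := fun t : ℝ => -t * Real.exp (-t ^ 2 / 2)) (a := x) (m := 0)
    (fun t _ => hasDerivAt_gauss t) gauss_mul_integrable.integrableOn ?_
  · rw [h, sub_zero]
  · apply tendsto_of_tendsto_of_tendsto_of_le_of_le' tendsto_const_nhds
      Real.tendsto_exp_atBot
    · exact Eventually.of_forall fun t => (Real.exp_pos _).le
    · filter_upwards [eventually_le_atBot (-2 : ℝ)] with t ht
      apply Real.exp_le_exp.mpr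
      nlinarith

lemma mills (x : ℝ) : 0 ≤ x * stdNormalCDF x + stdNormalPDF x := by
  rcases le_or_gt 0 x with hx | hx
  · have := stdNormalCDF_pos x
    have := stdNormalPDF_pos x
    nlinarith
  · have hle : -x * stdNormalCDF x ≤ stdNormalPDF x := by
      unfold stdNormalCDF stdNormalPDF
      rw [← mul_assoc, mul_comm (-x), mul_assoc, ← MeasureTheory.integral_const_mul]
      refine mul_le_mul_of_nonneg_left ?_ (inv_pos.mpr sqrt_two_pi_pos).le
      rw [← integral_neg_mul_gauss x]
      refine setIntegral_mono_on (gauss_integrable.integrableOn.const_mul _)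
        gauss_mul_integrable.integrableOn measurableSet_Iic ?_
      intro t ht
      have : -x ≤ -t := by simpa using ht.out
      exact mul_le_mul_of_nonneg_right this (Real.exp_pos _).le
    linarith

lemma hasDerivAt_stdNormalPDF (x : ℝ) :
    HasDerivAt stdNormalPDF (-x * stdNormalPDF x) x := by
  have h := (hasDerivAt_gauss x).const_mul ((Real.sqrt (2 * Real.pi))⁻¹)
  have he : (Real.sqrt (2 * Real.pi))⁻¹ * (-x * Real.exp (-x ^ 2 / 2)) =
      -x * stdNormalPDF x := by unfold stdNormalPDF; ring
  rw [← he]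
  exact h

lemma concave_logCDF : ConcaveOn ℝ univ (fun x => Real.log (stdNormalCDF x)) := by
  have hld : ∀ x : ℝ, HasDerivAt (fun x => Real.log (stdNormalCDF x))
      (stdNormalPDF x / stdNormalCDF x) x :=
    fun x => (hasDerivAt_stdNormalCDF x).log (stdNormalCDF_pos x).ne'
  have hd1 : deriv (fun x => Real.log (stdNormalCDF x)) =
      fun x => stdNormalPDF x / stdNormalCDF x := funext fun x => (hld x).deriv
  have hld2 : ∀ x : ℝ, HasDerivAt (fun x => stdNormalPDF x / stdNormalCDF x)
      ((-x * stdNormalPDF x * stdNormalCDF x - stdNormalPDF x * stdNormalPDF x) /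
        (stdNormalCDF x) ^ 2) x :=
    fun x => (hasDerivAt_stdNormalPDF x).div (hasDerivAt_stdNormalCDF x)
      (stdNormalCDF_pos x).ne'
  refine concaveOn_univ_of_deriv2_nonpos
    (fun x => (hld x).differentiableAt) ?_ ?_
  · rw [hd1]; exact fun x => (hld2 x).differentiableAt
  · intro x
    have : deriv^[2] (fun x => Real.log (stdNormalCDF x)) x =
        deriv (deriv (fun x => Real.log (stdNormalCDF x))) x := by
      simp [Function.iterate_succ_apply', Function.iterate_one]
    rw [this, hd1, (hld2 x).deriv]
    apply div_nonpos_of_nonpos_of_nonneg _ (sq_nonneg _)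
    have h1 := mills x
    have h2 := (stdNormalPDF_pos x).le
    nlinarith

lemma cdf_three_point {α : ℝ} (hα : 1 < α) (β δ : ℝ) :
    stdNormalCDF (β + (α - 1) * δ) * stdNormalCDF (β - δ) ^ (α - 1) ≤
      stdNormalCDF β ^ α := by
  have hαpos : (0:ℝ) < α := by linarith
  have h := concave_logCDF.2 (mem_univ (β + (α - 1) * δ)) (mem_univ (β - δ))
    (show (0:ℝ) ≤ 1 / α by positivity)
    (show (0:ℝ) ≤ 1 - 1 / α by rw [sub_nonneg, div_le_one hαpos]; linarith)
    (show 1 / α + (1 - 1 / α) = 1 by ring)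
  have hpt : (1 / α) • (β + (α - 1) * δ) + (1 - 1 / α) • (β - δ) = β := by
    simp only [smul_eq_mul]
    field_simp
    ring
  rw [hpt] at h
  simp only [smul_eq_mul] at h
  set LA := Real.log (stdNormalCDF (β + (α - 1) * δ)) with hLA
  set LC := Real.log (stdNormalCDF (β - δ)) with hLC
  set LB := Real.log (stdNormalCDF β) with hLB
  have h3 := mul_le_mul_of_nonneg_left h hαpos.le
  have expand : α * (1 / α * LA + (1 - 1 / α) * LC) = LA + (α - 1) * LC := by
    field_simp
  rw [expand] at h3
  have e1 : stdNormalCDF (β + (α - 1) * δ) * stdNormalCDF (β - δ) ^ (α - 1) =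
      Real.exp (LA + (α - 1) * LC) := by
    rw [Real.exp_add, Real.exp_log (stdNormalCDF_pos _), hLC,
      Real.rpow_def_of_pos (stdNormalCDF_pos _)]
    ring_nf
  have e2 : stdNormalCDF β ^ α = Real.exp (α * LB) := by
    rw [hLB, Real.rpow_def_of_pos (stdNormalCDF_pos _), mul_comm]
  rw [e1, e2]
  exact Real.exp_le_exp.mpr h3

lemma integral_gauss_shift (s c B : ℝ) (hs : 0 < s) :
    ∫ x in Set.Iic B, Real.exp (-((x - c) / s) ^ 2 / 2) =
      s * ∫ t in Set.Iic ((B - c) / s), Real.exp (-t ^ 2 / 2) := by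
  set g : ℝ → ℝ := fun t => Real.exp (-t ^ 2 / 2) with hg
  have h1 : ∀ x : ℝ, (Set.Iic B).indicator (fun x => g ((x - c) / s)) x =
      (Set.Iic ((B - c) / s)).indicator g ((x - c) / s) := by
    intro x
    have hiff : (x - c) / s ≤ (B - c) / s ↔ x ≤ B := by
      rw [div_le_div_iff₀ hs hs]
      constructor
      · intro h; nlinarith
      · intro h; nlinarith
    simp [Set.indicator_apply, Set.mem_Iic, hiff]
  rw [← integral_indicator measurableSet_Iic]
  calc (∫ x, (Set.Iic B).indicator (fun x => g ((x - c) / s)) x)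
      = ∫ x, (Set.Iic ((B - c) / s)).indicator g ((x - c) / s) := by
        exact integral_congr_ae (Eventually.of_forall h1)
    _ = ∫ x, (Set.Iic ((B - c) / s)).indicator g (s⁻¹ * x) := by
        have heq := integral_add_right_eq_self (μ := volume)
          (fun x : ℝ => (Set.Iic ((B - c) / s)).indicator g (s⁻¹ * x)) (-c)
        rw [← heq]
        refine integral_congr_ae (Eventually.of_forall fun x => ?_)
        show (Set.Iic ((B - c) / s)).indicator g ((x - c) / s) =
          (Set.Iic ((B - c) / s)).indicator g (s⁻¹ * (x + -c))
        congr 1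
        rw [← sub_eq_add_neg, div_eq_inv_mul]
    _ = |s| • ∫ t, (Set.Iic ((B - c) / s)).indicator g t :=
        MeasureTheory.Measure.integral_comp_inv_mul_left
          ((Set.Iic ((B - c) / s)).indicator g) s
    _ = s * ∫ t in Set.Iic ((B - c) / s), g t := by
        rw [abs_of_pos hs, smul_eq_mul, integral_indicator measurableSet_Iic]

lemma integral_gauss_cdf (s m B : ℝ) (hs : 0 < s) :
    ∫ x in Set.Iic B, 1 / (s * Real.sqrt (2 * Real.pi)) *
      Real.exp (-(x - m) ^ 2 / (2 * s ^ 2)) = stdNormalCDF ((B - m) / s) := by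
  have hre : ∀ x : ℝ, Real.exp (-(x - m) ^ 2 / (2 * s ^ 2)) =
      Real.exp (-((x - m) / s) ^ 2 / 2) := by
    intro x
    congr 1
    rw [div_pow, pow_two s, neg_div, neg_div, div_div]
    congr 2
    ring
  simp_rw [hre]
  rw [MeasureTheory.integral_const_mul, integral_gauss_shift s m B hs]
  unfold stdNormalCDF
  rw [← mul_assoc]
  congr 1
  field_simp [hs.ne', sqrt_two_pi_pos.ne']

/-- Theorem 4.1, one direction: the Rényi divergence
`D_α(f(·;0,μσ,-∞,b) ‖ f(·;μ,μσ,-∞,b))` is at most `α/(2σ²)`. -/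
theorem renyi_truncated_normal_halfline_le (μ σ α b : ℝ)
    (hμ : 0 < μ) (hσ : 0 < σ) (hα : 1 < α) :
    (1 / (α - 1)) * Real.log (∫ x in Set.Iic b,
        ((1 / (μ * σ * Real.sqrt (2 * Real.pi))) *
            Real.exp (-x ^ 2 / (2 * μ ^ 2 * σ ^ 2)) /
            stdNormalCDF (b / (μ * σ))) ^ α *
        ((1 / (μ * σ * Real.sqrt (2 * Real.pi))) *
            Real.exp (-(x - μ) ^ 2 / (2 * μ ^ 2 * σ ^ 2)) /
            stdNormalCDF ((b - μ) / (μ * σ))) ^ (1 - α)) ≤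
      α / (2 * σ ^ 2) := by
  have hs : 0 < μ * σ := mul_pos hμ hσ
  have hα1 : (0:ℝ) < α - 1 := by linarith
  set Φ₁ := stdNormalCDF (b / (μ * σ)) with hΦ₁def
  set Φ₂ := stdNormalCDF ((b - μ) / (μ * σ)) with hΦ₂def
  have hΦ₁ : 0 < Φ₁ := stdNormalCDF_pos _
  have hΦ₂ : 0 < Φ₂ := stdNormalCDF_pos _
  set A : ℝ := 1 / (μ * σ * Real.sqrt (2 * Real.pi)) with hAdef
  have hA : 0 < A := by rw [hAdef]; positivity
  set E : ℝ := α * (α - 1) / (2 * σ ^ 2) with hEdef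
  set K : ℝ := Real.exp E * Φ₁ ^ (-α) * Φ₂ ^ (α - 1) with hKdef
  set m : ℝ := (1 - α) * μ with hmdef
  have hpoint : ∀ x : ℝ,
      (A * Real.exp (-x ^ 2 / (2 * μ ^ 2 * σ ^ 2)) / Φ₁) ^ α *
        (A * Real.exp (-(x - μ) ^ 2 / (2 * μ ^ 2 * σ ^ 2)) / Φ₂) ^ (1 - α) =
      K * (A * Real.exp (-(x - m) ^ 2 / (2 * (μ * σ) ^ 2))) := by
    intro x
    have hp : A * Real.exp (-x ^ 2 / (2 * μ ^ 2 * σ ^ 2)) / Φ₁ =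
        Real.exp (Real.log A + -x ^ 2 / (2 * μ ^ 2 * σ ^ 2) - Real.log Φ₁) := by
      rw [Real.exp_sub, Real.exp_add, Real.exp_log hA, Real.exp_log hΦ₁]
    have hq : A * Real.exp (-(x - μ) ^ 2 / (2 * μ ^ 2 * σ ^ 2)) / Φ₂ =
        Real.exp (Real.log A + -(x - μ) ^ 2 / (2 * μ ^ 2 * σ ^ 2) - Real.log Φ₂) := by
      rw [Real.exp_sub, Real.exp_add, Real.exp_log hA, Real.exp_log hΦ₂]
    have hK : K * (A * Real.exp (-(x - m) ^ 2 / (2 * (μ * σ) ^ 2))) =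
        Real.exp (E + Real.log Φ₁ * (-α) + Real.log Φ₂ * (α - 1) + Real.log A +
          -(x - m) ^ 2 / (2 * (μ * σ) ^ 2)) := by
      rw [hKdef, Real.rpow_def_of_pos hΦ₁, Real.rpow_def_of_pos hΦ₂,
        Real.exp_add, Real.exp_add, Real.exp_add, Real.exp_add, Real.exp_log hA]
      ring
    rw [hp, hq, ← Real.exp_mul, ← Real.exp_mul, ← Real.exp_add, hK]
    congr 1
    rw [hmdef, hEdef]
    field_simp
    ring
  have hInt : (∫ x in Set.Iic b,
      (A * Real.exp (-x ^ 2 / (2 * μ ^ 2 * σ ^ 2)) / Φ₁) ^ α *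
        (A * Real.exp (-(x - μ) ^ 2 / (2 * μ ^ 2 * σ ^ 2)) / Φ₂) ^ (1 - α)) =
      K * stdNormalCDF ((b - m) / (μ * σ)) := by
    rw [integral_congr_ae (Eventually.of_forall hpoint)]
    rw [MeasureTheory.integral_const_mul]
    rw [hAdef]
    rw [integral_gauss_cdf (μ * σ) m b hs]
  rw [hInt]
  set Φ₃ := stdNormalCDF ((b - m) / (μ * σ)) with hΦ₃def
  have hΦ₃pos : 0 < Φ₃ := stdNormalCDF_pos _
  have hkey : Φ₃ * Φ₂ ^ (α - 1) ≤ Φ₁ ^ α := by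
    have h := cdf_three_point hα (b / (μ * σ)) (μ / (μ * σ))
    have e3 : b / (μ * σ) + (α - 1) * (μ / (μ * σ)) = (b - m) / (μ * σ) := by
      rw [hmdef]
      field_simp
      ring
    have e2 : b / (μ * σ) - μ / (μ * σ) = (b - μ) / (μ * σ) := by
      rw [div_sub_div_same]
    rw [e3, e2] at h
    exact h
  have hKΦ : 0 < K * Φ₃ :=
    mul_pos (mul_pos (mul_pos (Real.exp_pos _) (Real.rpow_pos_of_pos hΦ₁ _))
      (Real.rpow_pos_of_pos hΦ₂ _)) hΦ₃pos
  have hle : K * Φ₃ ≤ Real.exp E := by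
    calc K * Φ₃ = Real.exp E * (Φ₁ ^ (-α) * (Φ₃ * Φ₂ ^ (α - 1))) := by
          rw [hKdef]; ring
      _ ≤ Real.exp E * (Φ₁ ^ (-α) * Φ₁ ^ α) := by
          apply mul_le_mul_of_nonneg_left _ (Real.exp_pos _).le
          exact mul_le_mul_of_nonneg_left hkey (Real.rpow_pos_of_pos hΦ₁ _).le
      _ = Real.exp E := by
          rw [← Real.rpow_add hΦ₁, neg_add_cancel, Real.rpow_zero, mul_one]
  have hlog : Real.log (K * Φ₃) ≤ E := (Real.log_le_iff_le_exp hKΦ).mpr hle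
  calc (1 / (α - 1)) * Real.log (K * Φ₃) ≤ (1 / (α - 1)) * E :=
        mul_le_mul_of_nonneg_left hlog (by positivity)
    _ = α / (2 * σ ^ 2) := by
        rw [hEdef]
        field_simp
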